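/- Let A be Hurwitz, P symmetric positive definite with L L^T = -A^T P - P A for invertible L, and H ∈ ℝ^{n × n²}. If ‖x‖₂ < σ_min(L)² / (2 ‖P‖_F ‖H‖_F) and x ≠ 0, then the Lyapunov derivative x^T(A^T P + P A)x + 2 x^T P H(x ⊗ x) is negative. -/

import Mathlib

open Matrix BigOperators

noncomputable def frobNorm {m n : Type*} [Fintype m] [Fintype n] (M : Matrix m n ℝ) : ℝ :=
  Real.sqrt (∑ i, ∑ j, (M i j) ^ 2)

noncomputable def eucNorm {m : Type*} [Fintype m] (x : m → ℝ) : ℝ :=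
  Real.sqrt (∑ i, (x i) ^ 2)

def kron {n : ℕ} (x : Fin n → ℝ) : Fin n × Fin n → ℝ :=
  fun p => x p.1 * x p.2

lemma eucNorm_nonneg {m : Type*} [Fintype m] (x : m → ℝ) : 0 ≤ eucNorm x := Real.sqrt_nonneg _

lemma frobNorm_nonneg {m k : Type*} [Fintype m] [Fintype k] (M : Matrix m k ℝ) :
    0 ≤ frobNorm M := Real.sqrt_nonneg _

lemma sq_eucNorm {m : Type*} [Fintype m] (x : m → ℝ) : (eucNorm x) ^ 2 = ∑ i, (x i) ^ 2 :=
  Real.sq_sqrt (Finset.sum_nonneg fun _ _ => sq_nonneg _)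

lemma dot_le {m : Type*} [Fintype m] (x z : m → ℝ) :
    |dotProduct x z| ≤ eucNorm x * eucNorm z := by
  have h := Finset.sum_mul_sq_le_sq_mul_sq Finset.univ x z
  have := Real.sqrt_le_sqrt h
  rw [Real.sqrt_sq_eq_abs, Real.sqrt_mul (Finset.sum_nonneg fun _ _ => sq_nonneg _)] at this
  exact this

lemma mulVec_norm_le {m k : Type*} [Fintype m] [Fintype k] (M : Matrix m k ℝ) (y : k → ℝ) :
    eucNorm (M.mulVec y) ≤ frobNorm M * eucNorm y := by
  have hstep : ∑ i, (M.mulVec y i) ^ 2 ≤ (∑ i, ∑ j, (M i j) ^ 2) * ∑ j, (y j) ^ 2 := by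
    rw [Finset.sum_mul]
    apply Finset.sum_le_sum
    intro i _
    exact Finset.sum_mul_sq_le_sq_mul_sq Finset.univ (M i) y
  have := Real.sqrt_le_sqrt hstep
  rwa [Real.sqrt_mul (x := ∑ i, ∑ j, (M i j) ^ 2) (Finset.sum_nonneg fun _ _ =>
    Finset.sum_nonneg fun _ _ => sq_nonneg _)] at this

lemma eucNorm_kron {n : ℕ} (x : Fin n → ℝ) : eucNorm (kron x) = (eucNorm x) ^ 2 := by
  have : ∑ p : Fin n × Fin n, (kron x p) ^ 2 = (∑ i, (x i) ^ 2) ^ 2 := by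
    rw [Fintype.sum_prod_type, sq (∑ i, (x i) ^ 2), Finset.sum_mul_sum]
    simp [kron, mul_pow]
  rw [eucNorm, this, Real.sqrt_sq (Finset.sum_nonneg fun _ _ => sq_nonneg _), sq_eucNorm]

lemma eucNorm_pos {m : Type*} [Fintype m] {x : m → ℝ} (hx : x ≠ 0) : 0 < eucNorm x := by
  obtain ⟨i, hi⟩ : ∃ i, x i ≠ 0 := by
    by_contra h; push_neg at h; exact hx (funext h)
  apply Real.sqrt_pos.2
  exact Finset.sum_pos' (fun _ _ => sq_nonneg _) ⟨i, Finset.mem_univ i, by positivity⟩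

lemma frobNorm_pos {m k : Type*} [Fintype m] [Fintype k] {M : Matrix m k ℝ} (hM : M ≠ 0) :
    0 < frobNorm M := by
  obtain ⟨i, j, hij⟩ : ∃ i j, M i j ≠ 0 := by
    by_contra h; push_neg at h
    exact hM (by ext i j; simpa using h i j)
  apply Real.sqrt_pos.2
  refine Finset.sum_pos' (fun _ _ => Finset.sum_nonneg fun _ _ => sq_nonneg _)
    ⟨i, Finset.mem_univ i, Finset.sum_pos' (fun _ _ => sq_nonneg _)
      ⟨j, Finset.mem_univ j, by positivity⟩⟩

theorem lyapunov_derivative_neg_in_ball (n : ℕ)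
    (A P L : Matrix (Fin n) (Fin n) ℝ)
    (H : Matrix (Fin n) (Fin n × Fin n) ℝ)
    (hHurwitz : ∀ μ : ℂ, ((A.map Complex.ofReal).charpoly).IsRoot μ → μ.re < 0)
    (hPsymm : P.IsSymm) (hP : P.PosDef)
    (hL : IsUnit L.det)
    (hLyap : L * Lᵀ = -Aᵀ * P - P * A)
    (s : ℝ) (hs : 0 < s)
    (hsmin : ∀ y : Fin n → ℝ, s ^ 2 * (eucNorm y) ^ 2 ≤ dotProduct y ((L * Lᵀ).mulVec y))
    (hH : H ≠ 0)
    (x : Fin n → ℝ) (hx0 : x ≠ 0)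
    (hxball : eucNorm x < s ^ 2 / (2 * frobNorm P * frobNorm H)) :
    dotProduct x ((Aᵀ * P + P * A).mulVec x)
      + 2 * dotProduct x (P.mulVec (H.mulVec (kron x))) < 0 := by
  set a := eucNorm x with ha
  have hapos : 0 < a := eucNorm_pos hx0
  have hHf : 0 < frobNorm H := frobNorm_pos hH
  -- frobNorm P > 0
  have hPx : (0:ℝ) < dotProduct x (P.mulVec x) := by
    have := hP.dotProduct_mulVec_pos hx0
    simpa using this
  have hPf : 0 < frobNorm P := by
    rcases lt_or_eq_of_le (frobNorm_nonneg P) with h | h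
    · exact h
    · exfalso
      have h2 := le_trans (le_abs_self _) (dot_le x (P.mulVec x))
      have h3 := mulVec_norm_le P x
      rw [← h, zero_mul] at h3
      have h4 : eucNorm (P.mulVec x) = 0 := le_antisymm h3 (eucNorm_nonneg _)
      rw [h4, mul_zero] at h2
      linarith
  -- rewrite first term
  have hA : Aᵀ * P + P * A = -(L * Lᵀ) := by rw [hLyap]; noncomm_ring
  have hterm1 : dotProduct x ((Aᵀ * P + P * A).mulVec x)
      = - dotProduct x ((L * Lᵀ).mulVec x) := by
    rw [hA, Matrix.neg_mulVec, dotProduct_neg]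
  have h1 : dotProduct x ((Aᵀ * P + P * A).mulVec x) ≤ -(s ^ 2 * a ^ 2) := by
    rw [hterm1]; linarith [hsmin x]
  -- bound second term
  have h2 : dotProduct x (P.mulVec (H.mulVec (kron x)))
      ≤ frobNorm P * frobNorm H * a ^ 3 := by
    have hb1 := le_trans (le_abs_self _) (dot_le x (P.mulVec (H.mulVec (kron x))))
    have hb2 := mulVec_norm_le P (H.mulVec (kron x))
    have hb3 := mulVec_norm_le H (kron x)
    rw [eucNorm_kron] at hb3
    have hk : eucNorm (P.mulVec (H.mulVec (kron x))) ≤ frobNorm P * (frobNorm H * a ^ 2) := by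
      calc eucNorm (P.mulVec (H.mulVec (kron x))) ≤ frobNorm P * eucNorm (H.mulVec (kron x)) := hb2
        _ ≤ frobNorm P * (frobNorm H * a ^ 2) := by
            exact mul_le_mul_of_nonneg_left hb3 (frobNorm_nonneg P)
    nlinarith [eucNorm_nonneg x]
  have hc : 0 < 2 * frobNorm P * frobNorm H := by positivity
  have hca : a * (2 * frobNorm P * frobNorm H) < s ^ 2 := by
    rw [← lt_div_iff₀ hc]; exact hxball
  nlinarith [sq_nonneg a, mul_pos hapos hapos]
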